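/- For every integer n ≥ 1, the range of the Bost–Connes map ρₙ on the group algebra A = ℚ[ℚ/ℤ] equals the compressed algebra eₙA = {eₙ · a : a ∈ A}, where eₙ = ρₙ(1); consequently ρₙ is an isomorphism of A onto the compressed algebra eₙAeₙ = eₙA (A being commutative). -/

import Mathlib

open AddMonoidAlgebra

/-- The rational group algebra `A = ℚ[ℚ/ℤ]` of `ℚ/ℤ = AddCircle (1 : ℚ)`. -/
abbrev BC.A : Type := AddMonoidAlgebra ℚ (AddCircle (1 : ℚ))

/-- The Bost–Connes map `ρₙ : A → A`, the `ℚ`-linear map determined on the canonical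
basis elements `e_r = single r 1` by `ρₙ(e_r) = (1/n) ∑_{s : n • s = r} e_s`, the
(finite) sum running over the `n` solutions `s ∈ ℚ/ℤ` of `n • s = r`. -/
noncomputable def BC.rho (n : ℕ) : BC.A →ₗ[ℚ] BC.A :=
  (Finsupp.lift BC.A ℚ (AddCircle (1 : ℚ)) fun r =>
    (n : ℚ)⁻¹ • ∑ᶠ (s : AddCircle (1 : ℚ)) (_ : n • s = r), AddMonoidAlgebra.single s (1 : ℚ))
  ∘ₗ (AddMonoidAlgebra.coeffLinearEquiv ℚ).toLinearMap

namespace BC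

local notation "G" => AddCircle (1 : ℚ)

instance : Fact ((0 : ℚ) < 1) := ⟨one_pos⟩

lemma nsmul_surj {n : ℕ} (hn : 1 ≤ n) (r : G) : ∃ s : G, n • s = r := by
  refine ⟨DivisibleBy.div r (n : ℤ), ?_⟩
  have hz : ((n : ℤ)) ≠ 0 := by exact_mod_cast (by omega : n ≠ 0)
  have h := DivisibleBy.div_cancel r hz
  rw [← natCast_zsmul]
  exact h

lemma fiber_finite {n : ℕ} (hn : 1 ≤ n) (r : G) : {s : G | n • s = r}.Finite := by
  obtain ⟨s0, hs0⟩ := nsmul_surj hn r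
  have h0 : {t : G | n • t = 0}.Finite := by
    have hsub : {t : G | n • t = 0} ⊆ ⋃ d ∈ n.divisors, {u : G | addOrderOf u = d} := by
      intro t ht
      have hd : addOrderOf t ∣ n := addOrderOf_dvd_iff_nsmul_eq_zero.mpr ht
      exact Set.mem_biUnion (Nat.mem_divisors.mpr ⟨hd, by omega⟩) rfl
    exact (Set.Finite.biUnion n.divisors.finite_toSet fun d hd =>
      AddCircle.finite_setOf_addOrderOf_eq (p := (1:ℚ)) (Nat.pos_of_mem_divisors hd)).subset hsub
  have hsub : {s : G | n • s = r} ⊆ (fun t => s0 + t) '' {t : G | n • t = 0} := by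
    intro s hs
    refine ⟨s - s0, ?_, by show s0 + (s - s0) = s; rw [add_comm]; exact sub_add_cancel s s0⟩
    have : n • s = r := hs
    simp [Set.mem_setOf_eq, smul_sub, this, hs0]
  exact (h0.image _).subset hsub

lemma rho_single_apply {n : ℕ} (hn : 1 ≤ n) (r : G) (c : ℚ) (q : G) :
    (BC.rho n (AddMonoidAlgebra.single r c)).coeff q =
      if n • q = r then c * (n : ℚ)⁻¹ else 0 := by
  classical
  have hfin := fiber_finite hn r
  have hS : (∑ᶠ (s : G) (_ : n • s = r), AddMonoidAlgebra.single s (1 : ℚ))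
      = ∑ s ∈ hfin.toFinset, AddMonoidAlgebra.single s (1 : ℚ) :=
    finsum_cond_eq_sum_of_cond_iff _ fun {x} _ => by
      simp [Set.Finite.mem_toFinset]
  rw [BC.rho, LinearMap.comp_apply]
  change ((Finsupp.lift BC.A ℚ G fun r => (n : ℚ)⁻¹ • ∑ᶠ (s : G) (_ : n • s = r),
    AddMonoidAlgebra.single s (1 : ℚ)) (Finsupp.single r c)).coeff q = _
  erw [Finsupp.lift_apply, Finsupp.sum_single_index (by simp)]
  rw [hS]
  rw [AddMonoidAlgebra.coeff_smul, Finsupp.smul_apply, AddMonoidAlgebra.coeff_smul,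
    Finsupp.smul_apply, AddMonoidAlgebra.coeff_sum, Finsupp.finset_sum_apply]
  simp only [AddMonoidAlgebra.coeff_single, Finsupp.single_apply, smul_eq_mul]
  rw [Finset.sum_ite_eq' hfin.toFinset q (fun _ => (1 : ℚ))]
  by_cases h : n • q = r
  · simp [Set.Finite.mem_toFinset, h, mul_comm]
  · simp [Set.Finite.mem_toFinset, h]

lemma rho_one_apply {n : ℕ} (hn : 1 ≤ n) (q : G) :
    (BC.rho n 1).coeff q = if n • q = 0 then (n : ℚ)⁻¹ else 0 := by
  have : (1 : BC.A) = AddMonoidAlgebra.single (0 : G) (1 : ℚ) := rfl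
  rw [this, rho_single_apply hn]
  by_cases h : n • q = 0 <;> simp [h]

/-- section of multiplication by `n` -/
noncomputable def sec {n : ℕ} (hn : 1 ≤ n) (r : G) : G :=
  Classical.choose (nsmul_surj hn r)

lemma sec_spec {n : ℕ} (hn : 1 ≤ n) (r : G) : n • sec hn r = r :=
  Classical.choose_spec (nsmul_surj hn r)

lemma sec_inj {n : ℕ} (hn : 1 ≤ n) : Function.Injective (sec hn) := by
  intro a b h
  rw [← sec_spec hn a, ← sec_spec hn b, h]

lemma mul_one_rho {n : ℕ} (hn : 1 ≤ n) (a : BC.A) :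
    ∃ b : BC.A, BC.rho n 1 * a = BC.rho n b := by
  classical
  induction a using AddMonoidAlgebra.induction_linear with
  | zero => exact ⟨0, by rw [map_zero, mul_zero]⟩
  | add f g hf hg =>
      obtain ⟨bf, hbf⟩ := hf
      obtain ⟨bg, hbg⟩ := hg
      exact ⟨bf + bg, by rw [mul_add, hbf, hbg, map_add]⟩
  | single s c =>
      refine ⟨AddMonoidAlgebra.single (n • s) c, ?_⟩
      ext q
      rw [AddMonoidAlgebra.coeff_mul_single_apply, ← sub_eq_add_neg, rho_one_apply hn,
        rho_single_apply hn]
      have key : n • (q - s) = 0 ↔ n • q = n • s := by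
        rw [smul_sub, sub_eq_zero]
      by_cases h : n • q = n • s
      · rw [if_pos (key.mpr h), if_pos h, mul_comm]
      · rw [if_neg (fun hh => h (key.mp hh)), if_neg h, zero_mul]

lemma rho_eq_mul {n : ℕ} (hn : 1 ≤ n) (a : BC.A) :
    ∃ b : BC.A, BC.rho n a = BC.rho n 1 * b := by
  classical
  induction a using AddMonoidAlgebra.induction_linear with
  | zero => exact ⟨0, by rw [map_zero, mul_zero]⟩
  | add f g hf hg =>
      obtain ⟨bf, hbf⟩ := hf
      obtain ⟨bg, hbg⟩ := hg
      exact ⟨bf + bg, by rw [mul_add, ← hbf, ← hbg, map_add]⟩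
  | single r c =>
      refine ⟨AddMonoidAlgebra.single (sec hn r) c, ?_⟩
      ext q
      rw [AddMonoidAlgebra.coeff_mul_single_apply, ← sub_eq_add_neg, rho_one_apply hn,
        rho_single_apply hn]
      have key : n • (q - sec hn r) = 0 ↔ n • q = r := by
        rw [smul_sub, sub_eq_zero, sec_spec hn]
      by_cases h : n • q = r
      · rw [if_pos h, if_pos (key.mpr h), mul_comm]
      · rw [if_neg h, if_neg (fun hh => h (key.mp hh)), zero_mul]

lemma rho_inj {n : ℕ} (hn : 1 ≤ n) : Function.Injective (BC.rho n) := by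
  classical
  have hn0 : ((n : ℚ)) ≠ 0 := by exact_mod_cast (by omega : n ≠ 0)
  have hleft : ∀ a : BC.A,
      (n : ℚ) • Finsupp.comapDomain (sec hn) (BC.rho n a).coeff ((sec_inj hn).injOn) = a.coeff := by
    intro a
    induction a using AddMonoidAlgebra.induction_linear with
    | zero => simp
    | add f g hf hg =>
        rw [map_add, AddMonoidAlgebra.coeff_add, AddMonoidAlgebra.coeff_add, Finsupp.comapDomain_add_of_injective (sec_inj hn), smul_add, hf, hg]
    | single r c =>
        ext q
        rw [Finsupp.smul_apply, Finsupp.comapDomain_apply, rho_single_apply hn]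
        have key : n • sec hn q = r ↔ q = r := by
          rw [sec_spec hn]
        by_cases h : q = r
        · rw [if_pos (key.mpr h), h, AddMonoidAlgebra.coeff_single, Finsupp.single_eq_same]
          rw [smul_eq_mul]
          field_simp
        · rw [if_neg (fun hh => h (key.mp hh)), AddMonoidAlgebra.coeff_single, Finsupp.single_eq_of_ne h]
          simp
  intro a b hab
  have := hleft a
  rw [hab, hleft b] at this
  exact AddMonoidAlgebra.coeff_inj.mp this.symm

end BC

/-- For every `n ≥ 1`, the range of `ρₙ` is the compressed algebra
`eₙ A = {eₙ · a : a ∈ A}` where `eₙ = ρₙ(1)`; together with injectivity this makes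
`ρₙ` an isomorphism of `A` onto `eₙ A eₙ = eₙ A` (`A` being commutative). -/
theorem BC.rho_range (n : ℕ) (hn : 1 ≤ n) :
    Set.range (BC.rho n) = {x : BC.A | ∃ a : BC.A, x = BC.rho n 1 * a} ∧
      Function.Injective (BC.rho n) := by
  refine ⟨?_, BC.rho_inj hn⟩
  ext x
  constructor
  · rintro ⟨a, rfl⟩
    exact BC.rho_eq_mul hn a
  · rintro ⟨a, rfl⟩
    obtain ⟨b, hb⟩ := BC.mul_one_rho hn a
    exact ⟨b, hb.symm⟩
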